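/- Let V be an oriented 4-dimensional real vector space, ω a 2-form with ω∧ω > 0, and g an inner product on V. Then ω is compatible with g (i.e. there exists a complex structure J with g = ω(·,J·)) if and only if dvol_ω = dvol_g and ω is self-dual with respect to g. -/

import Mathlib

open Matrix MeasureTheory

noncomputable section

/-- Vectors in ℝ⁴. -/
abbrev V4 : Type := Fin 4 → ℝ

/-- 2-forms on ℝ⁴, represented by their (antisymmetric) coefficient matrices. -/
abbrev Mat4 : Type := Matrix (Fin 4) (Fin 4) ℝ

/-- The wedge product of two 2-forms, as the coefficient of dx0∧dx1∧dx2∧dx3. -/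
def w22 (A B : Mat4) : ℝ :=
  A 0 1 * B 2 3 - A 0 2 * B 1 3 + A 0 3 * B 1 2 +
  A 2 3 * B 0 1 - A 1 3 * B 0 2 + A 1 2 * B 0 3

/-- The wedge product of a 1-form and a 3-form (3-forms are written in the
basis σ_m = ι(e_m)(dx0∧dx1∧dx2∧dx3)), as a multiple of dx0∧dx1∧dx2∧dx3. -/
def w13 (l b : V4) : ℝ := l ⬝ᵥ b

/-- The wedge product of a 2-form and a 1-form, as a 3-form in the basis σ_m. -/
def w21 (A : Mat4) (l : V4) : V4 :=
  ![A 1 2 * l 3 - A 1 3 * l 2 + A 2 3 * l 1,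
    -(A 0 2 * l 3 - A 0 3 * l 2 + A 2 3 * l 0),
    A 0 1 * l 3 - A 0 3 * l 1 + A 1 3 * l 0,
    -(A 0 1 * l 2 - A 0 2 * l 1 + A 1 2 * l 0)]

/-- Interior product of a vector with a 2-form. -/
def iota2 (v : V4) (A : Mat4) : V4 := Aᵀ.mulVec v

/-- Interior product of a vector with a 4-form c·dx0∧dx1∧dx2∧dx3. -/
def iota4 (v : V4) (c : ℝ) : V4 := c • v

/-- The metric volume form of the inner product with Gram matrix G, as a
multiple of dx0∧dx1∧dx2∧dx3 (standard orientation). -/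
def volScalar (G : Mat4) : ℝ := Real.sqrt G.det

/-- The inner product with Gram matrix G. -/
def bilin (G : Mat4) (v w : V4) : ℝ := v ⬝ᵥ G.mulVec w

/-- The induced inner product on 1-forms. -/
def ip1 (G : Mat4) (l m : V4) : ℝ := l ⬝ᵥ G⁻¹.mulVec m

/-- The induced inner product on 2-forms. -/
def ip2 (G : Mat4) (A B : Mat4) : ℝ := (1 / 2) * (Aᵀ * G⁻¹ * B * G⁻¹).trace

/-- The wedge-duality involution on 2-forms (the Hodge star of the standard
metric), characterized by w22 A (dual2 B) = ip2 1 A B. -/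
def dual2 (A : Mat4) : Mat4 :=
  !![0, A 2 3, -(A 1 3), A 1 2;
     -(A 2 3), 0, A 0 3, -(A 0 2);
     A 1 3, -(A 0 3), 0, A 0 1;
     -(A 1 2), A 0 2, -(A 0 1), 0]

/-- The Hodge star on 2-forms of the metric with Gram matrix G,
characterized by α ∧ (hodge2 G β) = ⟨α,β⟩_G dvol_G. -/
def hodge2 (G : Mat4) (A : Mat4) : Mat4 := volScalar G • dual2 (G⁻¹ * A * G⁻¹)

/-- The Hodge star Λ¹ → Λ³ of G, characterized by λ ∧ (hodge1 G μ) = ⟨λ,μ⟩_G dvol_G. -/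
def hodge1 (G : Mat4) (m : V4) : V4 := volScalar G • G⁻¹.mulVec m

/-- The Hodge star Λ³ → Λ¹ of G, characterized by hodge1 G (hodge3 G b) = -b. -/
def hodge3 (G : Mat4) (b : V4) : V4 := -((volScalar G)⁻¹ • G.mulVec b)

/-- A complex structure J (J² = -1) is compatible with the standard orientation. -/
def posOrient (J : Mat4) : Prop :=
  ∃ v w : V4, 0 < (Matrix.of fun i k => ![v, J.mulVec v, w, J.mulVec w] k i).det

/-- The inner product on 2-forms induced by the standard metric. -/
def ip2std (A B : Mat4) : ℝ := (1 / 2) * (Aᵀ * B).trace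

/-- The involution R^ρ of the space of 2-forms determined by a
nondegenerate 2-form ρ (with matrix P). -/
def Rmap (P A : Mat4) : Mat4 := A - (w22 A P / (w22 P P / 2)) • P

/-- The standard hyperKähler triple ω₁ = dx0∧dx1 + dx2∧dx3, etc. -/
def sW1 : Mat4 := !![0,1,0,0; -1,0,0,0; 0,0,0,1; 0,0,-1,0]
def sW2 : Mat4 := !![0,0,1,0; 0,0,0,-1; -1,0,0,0; 0,1,0,0]
def sW3 : Mat4 := !![0,0,0,1; 0,0,1,0; 0,-1,0,0; -1,0,0,0]

lemma skw (A : Mat4) (hA : Aᵀ = -A) (i j : Fin 4) : A j i = -A i j := by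
  have := congrFun (congrFun hA i) j
  simpa using this

lemma skw_diag (A : Mat4) (hA : Aᵀ = -A) (i : Fin 4) : A i i = 0 := by
  have := skw A hA i i; linarith

lemma dual2_skew (A : Mat4) : (dual2 A)ᵀ = -(dual2 A) := by
  ext i j
  fin_cases i <;> fin_cases j <;> simp [dual2]

lemma dual2_dual2 (A : Mat4) (hA : Aᵀ = -A) : dual2 (dual2 A) = A := by
  ext i j
  fin_cases i <;> fin_cases j <;>
    simp [dual2, skw A hA 0 1, skw A hA 0 2, skw A hA 0 3, skw A hA 1 2, skw A hA 1 3,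
      skw A hA 2 3, skw_diag A hA]

lemma dual2_smul (c : ℝ) (A : Mat4) : dual2 (c • A) = c • dual2 A := by
  ext i j
  fin_cases i <;> fin_cases j <;> simp [dual2] <;> ring

lemma mul_dual2 (A : Mat4) (hA : Aᵀ = -A) : A * dual2 A = (-(w22 A A / 2)) • 1 := by
  ext i j
  fin_cases i <;> fin_cases j <;>
    simp [dual2, w22, Matrix.mul_apply, Fin.sum_univ_four, skw A hA 0 1, skw A hA 0 2,
      skw A hA 0 3, skw A hA 1 2, skw A hA 1 3, skw A hA 2 3, skw_diag A hA,
      Matrix.one_apply] <;> ring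

lemma dual2_mul (A : Mat4) (hA : Aᵀ = -A) : dual2 A * A = (-(w22 A A / 2)) • 1 := by
  ext i j
  fin_cases i <;> fin_cases j <;>
    simp [dual2, w22, Matrix.mul_apply, Fin.sum_univ_four, skw A hA 0 1, skw A hA 0 2,
      skw A hA 0 3, skw A hA 1 2, skw A hA 1 3, skw A hA 2 3, skw_diag A hA,
      Matrix.one_apply] <;> ring

lemma det_skew (A : Mat4) (hA : Aᵀ = -A) : A.det = (w22 A A / 2) ^ 2 := by
  rw [Matrix.det_succ_row_zero]
  simp only [Fin.sum_univ_succ, Matrix.det_succ_row_zero, Fin.sum_univ_zero, Matrix.det_fin_zero,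
    Matrix.submatrix_apply, Fin.succ_zero_eq_one, Fin.succ_one_eq_two, Fin.succAbove_zero]
  norm_num [Fin.succAbove, Fin.lt_def]
  simp only [(by decide : (Fin.succ 2 : Fin 4) = 3), (by decide : (Fin.castSucc 2 : Fin 4) = 2),
    (by decide : (Fin.succ 1 : Fin 4) = 2), (by decide : (Fin.castSucc 1 : Fin 4) = 1),
    (by decide : (Fin.succ 0 : Fin 4) = 1), (by decide : (Fin.castSucc 0 : Fin 4) = 0)]
  simp only [w22, skw A hA 0 1, skw A hA 0 2, skw A hA 0 3, skw A hA 1 2, skw A hA 1 3,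
    skw A hA 2 3, skw_diag A hA]
  ring

lemma w22_trace (B A : Mat4) (hB : Bᵀ = -B) : w22 B A = -(1/2) * (B * dual2 A).trace := by
  simp only [Matrix.trace, Matrix.diag, Fin.sum_univ_four, Matrix.mul_apply, w22, dual2,
    skw B hB 0 1, skw B hB 0 2, skw B hB 0 3, skw B hB 1 2, skw B hB 1 3, skw B hB 2 3,
    skw_diag B hB]
  norm_num [Fin.sum_univ_four]
  simp
  ring

lemma w22_sub (B X Y : Mat4) : w22 B (X - Y) = w22 B X - w22 B Y := by
  simp [w22]; ring

lemma w22_nondeg (D : Mat4) (hD : Dᵀ = -D)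
    (H : ∀ B : Mat4, Bᵀ = -B → w22 B D = 0) : D = 0 := by
  have skb : ∀ (a b c : ℝ),
      (!![0,a,b,c; -a,0,c,-b; -b,-c,0,a; -c,b,-a,0] : Mat4)ᵀ
        = -(!![0,a,b,c; -a,0,c,-b; -b,-c,0,a; -c,b,-a,0] : Mat4) := by
    intro a b c
    ext i j
    fin_cases i <;> fin_cases j <;> simp
  have skc : ∀ (a b c : ℝ),
      (!![0,a,b,c; -a,0,-c,b; -b,c,0,-a; -c,-b,a,0] : Mat4)ᵀ
        = -(!![0,a,b,c; -a,0,-c,b; -b,c,0,-a; -c,-b,a,0] : Mat4) := by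
    intro a b c
    ext i j
    fin_cases i <;> fin_cases j <;> simp
  have h1 := H _ (skb 1 0 0)
  have h2 := H _ (skc 1 0 0)
  have h3 := H _ (skb 0 1 0)
  have h4 := H _ (skc 0 1 0)
  have h5 := H _ (skb 0 0 1)
  have h6 := H _ (skc 0 0 1)
  simp [w22, Matrix.vecHead, Matrix.vecTail, Function.comp] at h1 h2 h3 h4 h5 h6
  ext i j
  fin_cases i <;> fin_cases j <;>
    simp [skw D hD 0 1, skw D hD 0 2, skw D hD 0 3, skw D hD 1 2, skw D hD 1 3,
      skw D hD 2 3, skw_diag D hD] <;> linarith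

lemma dp_mv (M : Mat4) (x z : V4) : (M.mulVec x) ⬝ᵥ z = x ⬝ᵥ (Mᵀ.mulVec z) := by
  simp [dotProduct, Matrix.mulVec, Fin.sum_univ_four, Matrix.transpose_apply]
  ring

lemma bilin_ext {M N : Mat4} (h : ∀ v w : V4, v ⬝ᵥ M.mulVec w = v ⬝ᵥ N.mulVec w) :
    M = N := by
  ext i j
  have := h (Pi.single i 1) (Pi.single j 1)
  simpa [single_dotProduct, Matrix.mulVec_single] using this

set_option maxHeartbeats 1000000 in
lemma pf_congr (P A : Mat4) (hA : Aᵀ = -A) :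
    w22 (Pᵀ * A * P) (Pᵀ * A * P) = P.det * w22 A A := by
  rw [Matrix.det_succ_row_zero]
  simp only [Fin.sum_univ_succ, Matrix.det_succ_row_zero, Fin.sum_univ_zero, Matrix.det_fin_zero,
    Matrix.submatrix_apply, Fin.succ_zero_eq_one, Fin.succ_one_eq_two, Fin.succAbove_zero]
  norm_num [Fin.succAbove, Fin.lt_def]
  simp only [(by decide : (Fin.succ 2 : Fin 4) = 3), (by decide : (Fin.castSucc 2 : Fin 4) = 2),
    (by decide : (Fin.succ 1 : Fin 4) = 2), (by decide : (Fin.castSucc 1 : Fin 4) = 1),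
    (by decide : (Fin.succ 0 : Fin 4) = 1), (by decide : (Fin.castSucc 0 : Fin 4) = 0)]
  simp only [w22, Matrix.mul_apply, Matrix.transpose_apply, Fin.sum_univ_four,
    skw A hA 0 1, skw A hA 0 2, skw A hA 0 3, skw A hA 1 2, skw A hA 1 3,
    skw A hA 2 3, skw_diag A hA]
  ring

/-- ω is compatible with g (there is an orientation-compatible
complex structure J with ω(·,J·) = g) iff dvol_ω = dvol_g and ω is self-dual. -/
theorem compatible_iff_selfdual (G : Mat4) (hG : G.PosDef)
    (A : Mat4) (hA : Aᵀ = -A) (hApos : 0 < w22 A A)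
    (star2 : Mat4 → Mat4)
    (hstar2 : ∀ B C : Mat4, Bᵀ = -B → Cᵀ = -C →
      w22 B (star2 C) = ip2 G B C * volScalar G)
    (hstar2' : ∀ C : Mat4, Cᵀ = -C → (star2 C)ᵀ = -(star2 C)) :
    (∃ J : Mat4, J * J = -1 ∧ posOrient J ∧
        ∀ v w : V4, v ⬝ᵥ A.mulVec (J.mulVec w) = bilin G v w) ↔
      (w22 A A / 2 = volScalar G ∧ star2 A = A) := by
  have hp : 0 < w22 A A / 2 := by linarith
  have hGdet : 0 < G.det := hG.det_pos
  have hGdetU : IsUnit G.det := isUnit_iff_ne_zero.mpr hGdet.ne'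
  have hGG : G⁻¹ * G = 1 := Matrix.nonsing_inv_mul G hGdetU
  have hGG' : G * G⁻¹ = 1 := Matrix.mul_nonsing_inv G hGdetU
  have hGsym : Gᵀ = G := by have := hG.1; simpa [Matrix.IsHermitian] using this
  have hGisym : G⁻¹ᵀ = G⁻¹ := by rw [Matrix.transpose_nonsing_inv, hGsym]
  constructor
  · rintro ⟨J, hJ2, -, hJg⟩
    have hAJ : A * J = G := by
      apply bilin_ext; intro v w
      have := hJg v w
      simpa [bilin, Matrix.mulVec_mulVec] using this
    have hdetA : A.det = (w22 A A / 2) ^ 2 := det_skew A hA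
    have hdetApos : 0 < A.det := by rw [hdetA]; positivity
    have hdetJ : J.det = 1 := by
      have h1 : J.det * J.det = 1 := by
        have := congrArg Matrix.det hJ2
        have h' : J.det * J.det = (-1 : ℝ) ^ 4 := by
          simpa [Matrix.det_mul, Matrix.det_neg, Fintype.card_fin] using this
        norm_num at h'
        exact h'
      have h2 : 0 < A.det * J.det := by rw [← Matrix.det_mul, hAJ]; exact hGdet
      have h3 : 0 < J.det := by
        by_contra h
        push_neg at h
        nlinarith
      rcases mul_self_eq_one_iff.mp h1 with h | h
      · exact h
      · exfalso; rw [h] at h3; linarith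
    have hdetG : G.det = (w22 A A / 2) ^ 2 := by
      rw [← hAJ, Matrix.det_mul, hdetJ, hdetA, mul_one]
    have hvol : volScalar G = w22 A A / 2 := by
      rw [volScalar, hdetG, Real.sqrt_sq hp.le]
    refine ⟨hvol.symm, ?_⟩
    have hd2 : dual2 A * A = (-(w22 A A / 2)) • 1 := dual2_mul A hA
    have hkey : G * dual2 A * G = (w22 A A / 2) • A := by
      calc G * dual2 A * G = A * (J * (dual2 A * A) * J) := by
            rw [← hAJ]; simp only [Matrix.mul_assoc]
        _ = A * (J * ((-(w22 A A / 2)) • (1 : Mat4)) * J) := by rw [hd2]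
        _ = (-(w22 A A / 2)) • (A * (J * J)) := by
            simp [Matrix.mul_smul, Matrix.smul_mul, Matrix.mul_assoc]
        _ = (w22 A A / 2) • A := by rw [hJ2]; simp
    have h3 : G⁻¹ * (G * dual2 A * G) * G⁻¹ = dual2 A := by
      have e : G⁻¹ * (G * dual2 A * G) * G⁻¹ = (G⁻¹ * G) * (dual2 A * (G * G⁻¹)) := by
        simp only [Matrix.mul_assoc]
      rw [e, hGG, hGG', Matrix.one_mul, Matrix.mul_one]
    have hdual : dual2 A = (w22 A A / 2) • (G⁻¹ * (A * G⁻¹)) := by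
      rw [← h3, hkey]
      simp [Matrix.mul_smul, Matrix.smul_mul, Matrix.mul_assoc]
    have hDskew : (star2 A - A)ᵀ = -(star2 A - A) := by
      rw [Matrix.transpose_sub, hstar2' A hA, hA]
      abel
    have hD := w22_nondeg (star2 A - A) hDskew ?_
    · exact sub_eq_zero.mp hD
    intro B hB
    rw [w22_sub, hstar2 B A hB hA, hvol, w22_trace B A hB, hdual]
    simp only [ip2, hB, Matrix.neg_mul, Matrix.trace_neg, Matrix.mul_smul, Matrix.trace_smul,
      smul_eq_mul, Matrix.mul_assoc]
    ring
  · rintro ⟨hvol, hsd⟩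
    have hvol' : volScalar G = w22 A A / 2 := hvol.symm
    have hX : (G⁻¹ * (A * G⁻¹))ᵀ = -(G⁻¹ * (A * G⁻¹)) := by
      simp only [Matrix.transpose_mul, hGisym, hA, Matrix.mul_neg, Matrix.neg_mul]
      rw [Matrix.mul_assoc]
    have hsX : ((w22 A A / 2) • (G⁻¹ * (A * G⁻¹)))ᵀ
        = -((w22 A A / 2) • (G⁻¹ * (A * G⁻¹))) := by
      rw [Matrix.transpose_smul, hX, smul_neg]
    have hAd : A = dual2 ((w22 A A / 2) • (G⁻¹ * (A * G⁻¹))) := by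
      have hDskew : (A - dual2 ((w22 A A / 2) • (G⁻¹ * (A * G⁻¹))))ᵀ
          = -(A - dual2 ((w22 A A / 2) • (G⁻¹ * (A * G⁻¹)))) := by
        rw [Matrix.transpose_sub, hA, dual2_skew]
        abel
      have hD := w22_nondeg _ hDskew ?_
      · exact sub_eq_zero.mp hD
      intro B hB
      have h1 := hstar2 B A hB hA
      rw [hsd, hvol'] at h1
      rw [w22_sub, h1, w22_trace B _ hB, dual2_dual2 _ hsX]
      simp only [ip2, hB, Matrix.neg_mul, Matrix.trace_neg, Matrix.mul_smul, Matrix.trace_smul,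
        smul_eq_mul, Matrix.mul_assoc]
      ring
    have hdual : dual2 A = (w22 A A / 2) • (G⁻¹ * (A * G⁻¹)) := by
      have h := congrArg dual2 hAd
      rwa [dual2_dual2 _ hsX] at h
    have hmul : A * ((w22 A A / 2) • (G⁻¹ * (A * G⁻¹))) = (-(w22 A A / 2)) • 1 := by
      rw [← hdual]; exact mul_dual2 A hA
    have hAGA' : A * (G⁻¹ * (A * G⁻¹)) = -1 := by
      rw [Matrix.mul_smul] at hmul
      have h2 : (w22 A A / 2) • (A * (G⁻¹ * (A * G⁻¹))) = (w22 A A / 2) • (-1 : Mat4) := by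
        rw [hmul, neg_smul, smul_neg]
      exact smul_right_injective Mat4 hp.ne' h2
    have hAGA2 : A * (G⁻¹ * A) = -G := by
      have e1 : A * (G⁻¹ * A) = A * (G⁻¹ * (A * G⁻¹)) * G := by
        simp only [Matrix.mul_assoc, hGG, Matrix.mul_one]
      rw [e1, hAGA', Matrix.neg_mul, Matrix.one_mul]
    have hJ2 : (-(G⁻¹ * A)) * (-(G⁻¹ * A)) = -1 := by
      rw [Matrix.neg_mul, Matrix.mul_neg, neg_neg]
      have e : (G⁻¹ * A) * (G⁻¹ * A) = G⁻¹ * (A * (G⁻¹ * A)) := by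
        simp only [Matrix.mul_assoc]
      rw [e, hAGA2, Matrix.mul_neg, hGG]
    have hGJ : G * (-(G⁻¹ * A)) = -A := by
      rw [Matrix.mul_neg, ← Matrix.mul_assoc, hGG', Matrix.one_mul]
    have homega : ∀ x y : V4, x ⬝ᵥ A *ᵥ y = -(x ⬝ᵥ G *ᵥ ((-(G⁻¹ * A)) *ᵥ y)) := by
      intro x y
      rw [Matrix.mulVec_mulVec, hGJ, Matrix.neg_mulVec, dotProduct_neg, neg_neg]
    have hJT : (-(G⁻¹ * A))ᵀ = A * G⁻¹ := by
      simp [Matrix.transpose_neg, Matrix.transpose_mul, hGisym, hA, Matrix.neg_mul]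
    have hJGJ : (-(G⁻¹ * A))ᵀ * (G * (-(G⁻¹ * A))) = G := by
      rw [hGJ, hJT, Matrix.mul_neg, Matrix.mul_assoc, hAGA2, neg_neg]
    have hgsymm : ∀ x y : V4, x ⬝ᵥ G *ᵥ y = y ⬝ᵥ G *ᵥ x := by
      intro x y
      calc x ⬝ᵥ G *ᵥ y = (G *ᵥ y) ⬝ᵥ x := dotProduct_comm _ _
        _ = y ⬝ᵥ Gᵀ *ᵥ x := dp_mv G y x
        _ = y ⬝ᵥ G *ᵥ x := by rw [hGsym]
    have hginv : ∀ x y : V4,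
        ((-(G⁻¹ * A)) *ᵥ x) ⬝ᵥ G *ᵥ ((-(G⁻¹ * A)) *ᵥ y) = x ⬝ᵥ G *ᵥ y := by
      intro x y
      calc ((-(G⁻¹ * A)) *ᵥ x) ⬝ᵥ G *ᵥ ((-(G⁻¹ * A)) *ᵥ y)
          = x ⬝ᵥ (-(G⁻¹ * A))ᵀ *ᵥ (G *ᵥ ((-(G⁻¹ * A)) *ᵥ y)) := dp_mv _ x _
        _ = x ⬝ᵥ ((-(G⁻¹ * A))ᵀ * (G * (-(G⁻¹ * A)))) *ᵥ y := by
            simp only [Matrix.mulVec_mulVec, Matrix.mul_assoc]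
        _ = x ⬝ᵥ G *ᵥ y := by rw [hJGJ]
    refine ⟨-(G⁻¹ * A), hJ2, ?_, ?_⟩
    · -- posOrient
      set J : Mat4 := -(G⁻¹ * A) with hJdef
      have hv0 : (Pi.single 0 1 : V4) ≠ 0 := by
        intro h; have := congrFun h 0; simp at this
      obtain ⟨v, hv0⟩ : ∃ v : V4, v ≠ 0 := ⟨Pi.single 0 1, hv0⟩
      obtain ⟨w, hw0, hw1, hw2⟩ : ∃ w : V4, w ≠ 0 ∧ v ⬝ᵥ G *ᵥ w = 0 ∧
          (J *ᵥ v) ⬝ᵥ G *ᵥ w = 0 := by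
        let f : V4 →ₗ[ℝ] Fin 2 → ℝ :=
          { toFun := fun w => ![v ⬝ᵥ G *ᵥ w, (J *ᵥ v) ⬝ᵥ G *ᵥ w]
            map_add' := by
              intro x y; funext i
              fin_cases i <;> simp [Matrix.mulVec_add, dotProduct_add]
            map_smul' := by
              intro c x; funext i
              fin_cases i <;> simp [Matrix.mulVec_smul, dotProduct_smul] }
        have hker : LinearMap.ker f ≠ ⊥ := by
          intro hbot
          have h1 := LinearMap.finrank_range_add_finrank_ker f
          rw [hbot, finrank_bot] at h1
          have h2 : Module.finrank ℝ (LinearMap.range f) ≤ Module.finrank ℝ (Fin 2 → ℝ) :=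
            Submodule.finrank_le _
          simp [Module.finrank_pi] at h1 h2
          omega
        obtain ⟨w, hw, hw0⟩ := (Submodule.ne_bot_iff _).mp hker
        refine ⟨w, hw0, ?_, ?_⟩
        · have := congrFun (LinearMap.mem_ker.mp hw) 0; simpa [f] using this
        · have := congrFun (LinearMap.mem_ker.mp hw) 1; simpa [f] using this
      have ha : 0 < v ⬝ᵥ G *ᵥ v := by simpa using hG.dotProduct_mulVec_pos hv0
      have hb : 0 < w ⬝ᵥ G *ᵥ w := by simpa using hG.dotProduct_mulVec_pos hw0
      set P : Mat4 := Matrix.of fun i k => ![v, J *ᵥ v, w, J *ᵥ w] k i with hPdef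
      have hMe : ∀ i j : Fin 4, (Pᵀ * A * P) i j
          = (![v, J *ᵥ v, w, J *ᵥ w] i) ⬝ᵥ A *ᵥ (![v, J *ᵥ v, w, J *ᵥ w] j) := by
        intro i j
        simp only [hPdef, Matrix.mul_apply, Matrix.mulVec, dotProduct, Fin.sum_univ_four,
          Matrix.transpose_apply, Matrix.of_apply]
        ring
      have hJu : J *ᵥ (J *ᵥ v) = -v := by
        rw [Matrix.mulVec_mulVec, hJ2, Matrix.neg_mulVec, Matrix.one_mulVec]
      have hJz : J *ᵥ (J *ᵥ w) = -w := by
        rw [Matrix.mulVec_mulVec, hJ2, Matrix.neg_mulVec, Matrix.one_mulVec]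
      have hvz : v ⬝ᵥ G *ᵥ (J *ᵥ w) = 0 := by
        have h := hginv v (J *ᵥ w)
        rw [hJz, Matrix.mulVec_neg, dotProduct_neg] at h
        rw [← h, hw2, neg_zero]
      have huz : (J *ᵥ v) ⬝ᵥ G *ᵥ (J *ᵥ w) = 0 := by
        rw [hginv v w]; exact hw1
      have hM01 : (Pᵀ * A * P) 0 1 = v ⬝ᵥ G *ᵥ v := by
        rw [hMe]
        show v ⬝ᵥ A *ᵥ (J *ᵥ v) = v ⬝ᵥ G *ᵥ v
        rw [homega, hJu, Matrix.mulVec_neg, dotProduct_neg, neg_neg]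
      have hM23 : (Pᵀ * A * P) 2 3 = w ⬝ᵥ G *ᵥ w := by
        rw [hMe]
        show w ⬝ᵥ A *ᵥ (J *ᵥ w) = w ⬝ᵥ G *ᵥ w
        rw [homega, hJz, Matrix.mulVec_neg, dotProduct_neg, neg_neg]
      have hM02 : (Pᵀ * A * P) 0 2 = 0 := by
        rw [hMe]
        show v ⬝ᵥ A *ᵥ w = 0
        rw [homega, hvz, neg_zero]
      have hM03 : (Pᵀ * A * P) 0 3 = 0 := by
        rw [hMe]
        show v ⬝ᵥ A *ᵥ (J *ᵥ w) = 0
        rw [homega, hJz, Matrix.mulVec_neg, dotProduct_neg, neg_neg, hw1]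
      have hM12 : (Pᵀ * A * P) 1 2 = 0 := by
        rw [hMe]
        show (J *ᵥ v) ⬝ᵥ A *ᵥ w = 0
        rw [homega, huz, neg_zero]
      have hM13 : (Pᵀ * A * P) 1 3 = 0 := by
        rw [hMe]
        show (J *ᵥ v) ⬝ᵥ A *ᵥ (J *ᵥ w) = 0
        rw [homega, hJz, Matrix.mulVec_neg, dotProduct_neg, neg_neg, hw2]
      have hpf := pf_congr P A hA
      have hw22 : w22 (Pᵀ * A * P) (Pᵀ * A * P)
          = 2 * ((v ⬝ᵥ G *ᵥ v) * (w ⬝ᵥ G *ᵥ w)) := by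
        simp only [w22, hM01, hM23, hM02, hM03, hM12, hM13]
        ring
      rw [hw22] at hpf
      exact ⟨v, w, by nlinarith [mul_pos ha hb]⟩
    · -- bilinear form
      intro v w
      rw [Matrix.mulVec_mulVec]
      have hAJ : A * (-(G⁻¹ * A)) = G := by
        rw [Matrix.mul_neg, hAGA2, neg_neg]
      rw [hAJ]; rfl

end
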